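/- If Z ∼ N(μ, I_p) with p ≥ 3, then E[‖Z‖^{−2}] is finite and E[‖Z‖^{−2}] ≤ 1/(p − 2). -/

import Mathlib

open MeasureTheory ProbabilityTheory Finset

open Real Set Filter in
private lemma lint_Ioi_deriv' {g g' : ℝ → ℝ} {l : ℝ}
    (hderiv : ∀ x ∈ Set.Ici (0:ℝ), HasDerivAt g (g' x) x)
    (hpos : ∀ x ∈ Set.Ioi (0:ℝ), 0 ≤ g' x)
    (hg : Tendsto g atTop (nhds l)) :
    ∫⁻ t in Set.Ioi (0:ℝ), ENNReal.ofReal (g' t) = ENNReal.ofReal (l - g 0) := by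
  rw [← integral_Ioi_of_hasDerivAt_of_nonneg' hderiv hpos hg,
    ← ofReal_integral_eq_lintegral_ofReal (integrableOn_Ioi_deriv_of_nonneg' hderiv hpos hg)
      ((ae_restrict_iff' measurableSet_Ioi).mpr (Filter.Eventually.of_forall hpos))]

open Real Set Filter in
private lemma layer_cake' {s : ℝ} (hs : 0 < s) :
    ∫⁻ t in Set.Ioi (0:ℝ), ENNReal.ofReal (Real.exp (-(t * s))) = ENNReal.ofReal s⁻¹ := by
  have h := lint_Ioi_deriv' (g := fun t => -(Real.exp (-(t * s)) / s))
    (g' := fun t => Real.exp (-(t * s))) (l := 0) ?_ ?_ ?_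
  · rw [h]; norm_num
  · intro x _
    have h1 : HasDerivAt (fun t : ℝ => -(t * s)) (-s) x := by
      exact (hasDerivAt_mul_const s).neg
    have h2 := (Real.hasDerivAt_exp (-(x * s))).comp x h1
    have h3 := (h2.div_const s).neg
    refine h3.congr_deriv ?_
    field_simp
  · intro x _; positivity
  · have h4 : Tendsto (fun t : ℝ => t * s) atTop atTop :=
      Tendsto.atTop_mul_const hs tendsto_id
    have := (Real.tendsto_exp_neg_atTop_nhds_zero.comp h4).div_const s
    simpa using this.neg

open Real Set Filter in
private lemma rpow_layer' {r : ℝ} (hr : r < -1) :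
    ∫⁻ t in Set.Ioi (0:ℝ), ENNReal.ofReal ((1 + 2*t) ^ r) =
      ENNReal.ofReal (-1 / (2*(r+1))) := by
  have hr1 : r + 1 ≠ 0 := by linarith
  have h := lint_Ioi_deriv' (g := fun t => (1 + 2*t) ^ (r+1) / (2*(r+1)))
    (g' := fun t => (1 + 2*t) ^ r) (l := 0) ?_ ?_ ?_
  · rw [h]
    congr 1
    rw [mul_zero, add_zero, Real.one_rpow]
    field_simp
    ring
  · intro x hx
    have hb : (0:ℝ) < 1 + 2*x := by simp only [Set.mem_Ici] at hx; linarith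
    have h1 : HasDerivAt (fun t : ℝ => 1 + 2*t) 2 x := by
      simpa using ((hasDerivAt_id x).const_mul (2:ℝ)).const_add 1
    have h2 := (Real.hasDerivAt_rpow_const (x := 1 + 2*x) (p := r+1) (Or.inl hb.ne')).comp x h1
    have h3 := h2.div_const (2*(r+1))
    refine h3.congr_deriv ?_
    field_simp
    ring
  · intro x hx
    have hb : (0:ℝ) < 1 + 2*x := by simp only [Set.mem_Ioi] at hx; linarith
    positivity
  · have h1 : Tendsto (fun t : ℝ => 1 + 2*t) atTop atTop := by
      apply tendsto_atTop_add_const_left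
      exact (tendsto_id (α := ℝ)).const_mul_atTop two_pos
    have h2 : Tendsto (fun x : ℝ => x ^ (r+1)) atTop (nhds 0) := by
      have := tendsto_rpow_neg_atTop (y := -(r+1)) (by linarith)
      simpa using this
    have := (h2.comp h1).div_const (2*(r+1))
    simpa using this

open Real Set Filter in
private lemma gauss_factor_le' (m : ℝ) {t : ℝ} (ht : 0 ≤ t) :
    ∫⁻ x, ENNReal.ofReal (Real.exp (-(t * x^2))) ∂(gaussianReal m 1) ≤
      ENNReal.ofReal ((1 + 2*t) ^ (-(1:ℝ)/2)) := by
  have hu : (0:ℝ) < 1 + 2*t := by linarith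
  set c : ℝ := m / (1 + 2*t) with hc
  rw [gaussianReal_of_var_ne_zero m one_ne_zero,
    lintegral_withDensity_eq_lintegral_mul _ (measurable_gaussianPDF m 1)
      (by fun_prop)]
  have step1 : ∫⁻ x, (gaussianPDF m 1 * fun x => ENNReal.ofReal (Real.exp (-(t * x^2)))) x ≤
      ∫⁻ x, ENNReal.ofReal ((Real.sqrt (2*π))⁻¹ *
        Real.exp (-(((1+2*t)/2) * (x - c)^2))) := by
    apply lintegral_mono
    intro x
    simp only [Pi.mul_apply, gaussianPDF, gaussianPDFReal, NNReal.coe_one, mul_one]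
    rw [← ENNReal.ofReal_mul (by positivity)]
    apply ENNReal.ofReal_le_ofReal
    rw [mul_assoc, ← Real.exp_add]
    apply mul_le_mul_of_nonneg_left _ (by positivity)
    apply Real.exp_le_exp.2
    have key : (1 + 2*t) * ((-(x - m)^2 / (2*1) + -(t * x^2)) -
        (-(((1+2*t)/2) * (x - c)^2))) = -(t * m^2) := by
      rw [hc]; field_simp; ring
    nlinarith [mul_nonneg ht (sq_nonneg m)]
  refine le_trans step1 ?_
  have step2 : ∫⁻ x : ℝ, ENNReal.ofReal ((Real.sqrt (2*π))⁻¹ *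
        Real.exp (-(((1+2*t)/2) * (x - c)^2))) =
      ∫⁻ x : ℝ, ENNReal.ofReal ((Real.sqrt (2*π))⁻¹ *
        Real.exp (-(((1+2*t)/2) * x^2))) := by
    simp_rw [sub_eq_add_neg]
    exact lintegral_add_right_eq_self
      (fun x => ENNReal.ofReal ((Real.sqrt (2*π))⁻¹ * Real.exp (-(((1+2*t)/2) * x^2)))) (-c)
  rw [step2]
  have hint : Integrable (fun x : ℝ => (Real.sqrt (2*π))⁻¹ * Real.exp (-(((1+2*t)/2) * x^2))) := by
    apply Integrable.const_mul
    simpa [neg_mul] using integrable_exp_neg_mul_sq (by linarith : (0:ℝ) < (1+2*t)/2)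
  rw [← ofReal_integral_eq_lintegral_ofReal hint
    (Filter.Eventually.of_forall fun x => by positivity)]
  apply ENNReal.ofReal_le_ofReal
  rw [integral_const_mul]
  have h0 : ∫ x : ℝ, Real.exp (-(((1+2*t)/2) * x^2)) = Real.sqrt (π / ((1+2*t)/2)) := by
    simpa [neg_mul] using integral_gaussian ((1+2*t)/2)
  rw [h0]
  have h1 : π / ((1+2*t)/2) = 2*π / (1+2*t) := by field_simp
  have h2 : Real.sqrt (2*π / (1+2*t)) = Real.sqrt (2*π) / Real.sqrt (1+2*t) :=
    Real.sqrt_div (by positivity) _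
  have h3 : (1+2*t) ^ ((-1:ℝ)/2) = (Real.sqrt (1+2*t))⁻¹ := by
    rw [neg_div, Real.rpow_neg hu.le, Real.sqrt_eq_rpow]
  rw [h1, h2, h3]
  have hs : Real.sqrt (2*π) ≠ 0 := by positivity
  rw [div_eq_mul_inv, ← mul_assoc, inv_mul_cancel₀ hs, one_mul]

open scoped ENNReal in
private lemma lintegral_pi_prod' {n : ℕ} (μ : Fin n → Measure ℝ) [inst : ∀ i, SigmaFinite (μ i)]
    (f : Fin n → ℝ → ℝ≥0∞) (hf : ∀ i, Measurable (f i)) :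
    ∫⁻ x : Fin n → ℝ, ∏ i, f i (x i) ∂Measure.pi μ = ∏ i, ∫⁻ x, f i x ∂(μ i) := by
  induction n with
  | zero => simp [Measure.pi_of_empty]
  | succ n ih =>
    have hmp := (measurePreserving_piFinSuccAbove μ 0).symm
    rw [← hmp.lintegral_comp_emb (MeasurableEquiv.measurableEmbedding _)]
    simp_rw [MeasurableEquiv.piFinSuccAbove_symm_apply, Fin.insertNthEquiv,
      Fin.prod_univ_succ, Fin.insertNth_zero, Equiv.coe_fn_mk, Fin.zero_succAbove, cast_eq,
      Fin.cons_zero, Fin.cons_succ]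
    rw [lintegral_prod_mul (f := f 0) (g := fun y : Fin n → ℝ => ∏ i, f i.succ (y i))
      (hf 0).aemeasurable
      (Finset.measurable_prod univ fun i _ =>
        (hf i.succ).comp (measurable_pi_apply i)).aemeasurable]
    rw [ih (fun i => μ i.succ) (fun i => f i.succ) (fun i => hf i.succ)]

instance gaussianReal_noAtoms (m : ℝ) : MeasureTheory.NullSingletonClass (gaussianReal m 1) :=
  ⟨fun x => (gaussianReal_absolutelyContinuous m one_ne_zero) (measure_singleton x)⟩

/-- The law of `Z ∼ N(μ, I_p)`: independent coordinates `Zᵢ ∼ N(μᵢ, 1)`. -/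
noncomputable def stdGaussianVec (p : ℕ) (μ : Fin p → ℝ) : Measure (Fin p → ℝ) :=
  Measure.pi fun i => gaussianReal (μ i) 1

/-- If `Z ∼ N(μ, I_p)` with `p ≥ 3`, then `E[‖Z‖⁻²]` is finite and
`E[‖Z‖⁻²] ≤ 1/(p − 2)`. -/
theorem gaussian_inv_normSq_integrable_and_le {p : ℕ} (hp : 3 ≤ p) (μ : Fin p → ℝ) :
    Integrable (fun z : Fin p → ℝ => (∑ i, z i ^ 2)⁻¹) (stdGaussianVec p μ) ∧
      (∫ z, (∑ i, z i ^ 2)⁻¹ ∂(stdGaussianVec p μ)) ≤ 1 / ((p : ℝ) - 2) := by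
  have hp3 : (3:ℝ) ≤ (p:ℝ) := by exact_mod_cast hp
  set ν := stdGaussianVec p μ with hν
  haveI : IsProbabilityMeasure ν := by
    rw [hν]; unfold stdGaussianVec; infer_instance
  have hS_meas : Measurable (fun z : Fin p → ℝ => ∑ i, z i ^ 2) := by fun_prop
  -- a.e. positivity of the sum of squares
  have hae : ∀ᵐ z ∂ν, 0 < ∑ i, z i ^ 2 := by
    have i0 : Fin p := ⟨0, by omega⟩
    have hsub : {z : Fin p → ℝ | ¬ 0 < ∑ i, z i ^ 2} ⊆ {z : Fin p → ℝ | z i0 = 0} := by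
      intro z hz
      simp only [Set.mem_setOf_eq, not_lt] at hz ⊢
      have hz0 : ∑ i, z i ^ 2 = 0 :=
        le_antisymm hz (Finset.sum_nonneg fun i _ => sq_nonneg _)
      have := (Finset.sum_eq_zero_iff_of_nonneg (fun i _ => sq_nonneg (z i))).1 hz0
        i0 (Finset.mem_univ _)
      exact pow_eq_zero_iff (n := 2) (by norm_num) |>.1 this
    rw [ae_iff]
    refine measure_mono_null hsub ?_
    exact Measure.pi_hyperplane _ i0 0
  -- per-t bound on the Laplace transform
  have hlap : ∀ t : ℝ, 0 ≤ t →
      ∫⁻ z, ENNReal.ofReal (Real.exp (-(t * ∑ i, z i ^ 2))) ∂ν ≤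
        ENNReal.ofReal ((1 + 2*t) ^ (-(p:ℝ)/2)) := by
    intro t ht
    have hu : (0:ℝ) < 1 + 2*t := by linarith
    have hprod : ∀ z : Fin p → ℝ,
        ENNReal.ofReal (Real.exp (-(t * ∑ i, z i ^ 2))) =
          ∏ i, ENNReal.ofReal (Real.exp (-(t * z i ^ 2))) := by
      intro z
      rw [show -(t * ∑ i, z i ^ 2) = ∑ i, -(t * z i ^ 2) by
          rw [Finset.mul_sum, ← Finset.sum_neg_distrib],
        Real.exp_sum, ENNReal.ofReal_prod_of_nonneg fun i _ => (Real.exp_pos _).le]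
    calc ∫⁻ z, ENNReal.ofReal (Real.exp (-(t * ∑ i, z i ^ 2))) ∂ν
        = ∏ i, ∫⁻ x, ENNReal.ofReal (Real.exp (-(t * x ^ 2))) ∂(gaussianReal (μ i) 1) := by
          simp_rw [hprod]
          exact lintegral_pi_prod' (fun i => gaussianReal (μ i) 1)
            (fun _ x => ENNReal.ofReal (Real.exp (-(t * x ^ 2)))) (fun i => by fun_prop)
      _ ≤ ∏ _i : Fin p, ENNReal.ofReal ((1 + 2*t) ^ (-(1:ℝ)/2)) :=
          Finset.prod_le_prod' fun i _ => gauss_factor_le' (μ i) ht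
      _ = ENNReal.ofReal ((1 + 2*t) ^ (-(p:ℝ)/2)) := by
          rw [Finset.prod_const, Finset.card_univ, Fintype.card_fin,
            ← ENNReal.ofReal_pow (Real.rpow_nonneg hu.le _)]
          congr 1
          rw [← Real.rpow_natCast ((1 + 2*t) ^ (-(1:ℝ)/2)) p, ← Real.rpow_mul hu.le]
          congr 1
          ring
  -- main lintegral bound
  have key : ∫⁻ z, ENNReal.ofReal ((∑ i, z i ^ 2)⁻¹) ∂ν ≤ ENNReal.ofReal (1/((p:ℝ)-2)) := by
    have hswap :
        ∫⁻ z, ENNReal.ofReal ((∑ i, z i ^ 2)⁻¹) ∂ν =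
          ∫⁻ t in Set.Ioi (0:ℝ), ∫⁻ z, ENNReal.ofReal (Real.exp (-(t * ∑ i, z i ^ 2))) ∂ν := by
      rw [show ∫⁻ z, ENNReal.ofReal ((∑ i, z i ^ 2)⁻¹) ∂ν =
          ∫⁻ z, (∫⁻ t in Set.Ioi (0:ℝ),
            ENNReal.ofReal (Real.exp (-(t * ∑ i, z i ^ 2)))) ∂ν from
        lintegral_congr_ae (by
          filter_upwards [hae] with z hz
          rw [layer_cake' hz])]
      exact lintegral_lintegral_swap (by fun_prop)
    rw [hswap]
    calc ∫⁻ t in Set.Ioi (0:ℝ), ∫⁻ z, ENNReal.ofReal (Real.exp (-(t * ∑ i, z i ^ 2))) ∂ν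
        ≤ ∫⁻ t in Set.Ioi (0:ℝ), ENNReal.ofReal ((1 + 2*t) ^ (-(p:ℝ)/2)) := by
          apply lintegral_mono_ae
          rw [ae_restrict_iff' measurableSet_Ioi]
          exact Filter.Eventually.of_forall fun t ht => hlap t (le_of_lt ht)
      _ = ENNReal.ofReal (-1 / (2*(-(p:ℝ)/2+1))) := rpow_layer' (by linarith)
      _ = ENNReal.ofReal (1/((p:ℝ)-2)) := by
          congr 1
          rw [show 2*(-(p:ℝ)/2+1) = -((p:ℝ)-2) by ring, div_neg, neg_div, neg_neg]
  have hnonneg : ∀ z : Fin p → ℝ, 0 ≤ (∑ i, z i ^ 2)⁻¹ := fun z =>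
    inv_nonneg.2 (Finset.sum_nonneg fun i _ => sq_nonneg _)
  have hint : Integrable (fun z : Fin p → ℝ => (∑ i, z i ^ 2)⁻¹) ν := by
    refine ⟨(hS_meas.inv).aestronglyMeasurable, ?_⟩
    rw [hasFiniteIntegral_iff_ofReal (Filter.Eventually.of_forall hnonneg)]
    exact lt_of_le_of_lt key ENNReal.ofReal_lt_top
  refine ⟨hint, ?_⟩
  rw [integral_eq_lintegral_of_nonneg_ae (Filter.Eventually.of_forall hnonneg)
    hint.aestronglyMeasurable]
  exact ENNReal.toReal_le_of_le_ofReal (div_nonneg zero_le_one (by linarith)) key
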